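/- For all y ≥ 1, the functions f(y) = 4y²(1+3y²+y⁴)/(1+y⁴)² and g(y) = 2(1+2y²+4y⁴+2y⁶+y⁸)/(1+y⁴)² both take values in (0,5], with f(1) = g(1) = 5, and f(y) < 5, g(y) < 5 for y > 1. -/

import Mathlib

theorem stmt3 (y : ℝ) (hy : 1 ≤ y) :
    (0 < 4*y^2*(1 + 3*y^2 + y^4)/(1 + y^4)^2 ∧
      4*y^2*(1 + 3*y^2 + y^4)/(1 + y^4)^2 ≤ 5) ∧
    (0 < 2*(1 + 2*y^2 + 4*y^4 + 2*y^6 + y^8)/(1 + y^4)^2 ∧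
      2*(1 + 2*y^2 + 4*y^4 + 2*y^6 + y^8)/(1 + y^4)^2 ≤ 5) ∧
    (y = 1 → 4*y^2*(1 + 3*y^2 + y^4)/(1 + y^4)^2 = 5 ∧
      2*(1 + 2*y^2 + 4*y^4 + 2*y^6 + y^8)/(1 + y^4)^2 = 5) ∧
    (1 < y → 4*y^2*(1 + 3*y^2 + y^4)/(1 + y^4)^2 < 5 ∧
      2*(1 + 2*y^2 + 4*y^4 + 2*y^6 + y^8)/(1 + y^4)^2 < 5) := by
  have hy0 : 0 < y := by linarith
  have hden : (0:ℝ) < (1 + y^4)^2 := by positivity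
  refine ⟨⟨by positivity, ?_⟩, ⟨by positivity, ?_⟩, ?_, ?_⟩
  · rw [div_le_iff₀ hden]; nlinarith [sq_nonneg (y-1), sq_nonneg (y^2-1), sq_nonneg (y^3-y), sq_nonneg (y^4-1), sq_nonneg y, sq_nonneg (y*(y-1)), sq_nonneg (y^2*(y-1))]
  · rw [div_le_iff₀ hden]; nlinarith [sq_nonneg (y-1), sq_nonneg (y^2-1), sq_nonneg (y^3-y), sq_nonneg (y^4-1), sq_nonneg (y*(y-1)), sq_nonneg (y^2*(y-1)), sq_nonneg (y^3-1)]
  · rintro rfl; norm_num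
  · intro h1
    constructor <;> rw [div_lt_iff₀ hden] <;>
      nlinarith [sq_nonneg (y-1), sq_nonneg (y^2-1), sq_nonneg (y^3-y), sq_nonneg (y^4-1), sq_nonneg (y*(y-1)), sq_nonneg (y^2*(y-1)), sq_nonneg (y^3-1), mul_pos (sub_pos.2 h1) (sub_pos.2 h1), sq_nonneg (y^2+y-2)]
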